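/- Any inefficient segmentation is Pareto dominated: if a segmentation contains a segment (C,p) with p strictly greater than the lowest value present in C, then there exists another segmentation in which every consumer's surplus is weakly higher and a positive measure of consumers have strictly higher surplus. -/

import Mathlib

/-- Revenue of price `v j` on coalition (measure function) `g`:
`v j * (measure of consumers with value ≥ v j)`. -/
noncomputable def rev {n : ℕ} (v g : Fin n → ℝ) (j : Fin n) : ℝ :=
  v j * ∑ i ∈ Finset.univ.filter (fun i => v j ≤ v i), g i

/-- `v j` is an optimal price for coalition `g`. -/
def IsOptimal {n : ℕ} (v g : Fin n → ℝ) (j : Fin n) : Prop :=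
  ∀ j' : Fin n, rev v g j' ≤ rev v g j

/-- Consumer surplus of a value-`x` consumer facing price `p`. -/
noncomputable def CS (x p : ℝ) : ℝ := max (x - p) 0

lemma rev_nonneg {n : ℕ} (v g : Fin n → ℝ) (hv : ∀ i, 0 < v i) (hg : ∀ i, 0 ≤ g i)
    (j : Fin n) : 0 ≤ rev v g j :=
  mul_nonneg (hv j).le (Finset.sum_nonneg fun i _ => hg i)

lemma rev_comb {n : ℕ} (v g : Fin n → ℝ) (i0 : Fin n) (a b : ℝ) (j : Fin n) :
    rev v (fun i => a * g i + (if i = i0 then b else 0)) j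
      = a * rev v g j + (if v j ≤ v i0 then v j * b else 0) := by
  unfold rev
  have h1 : ∑ i ∈ Finset.univ.filter (fun i => v j ≤ v i),
      (a * g i + (if i = i0 then b else 0))
      = a * ∑ i ∈ Finset.univ.filter (fun i => v j ≤ v i), g i
        + (if v j ≤ v i0 then b else 0) := by
    rw [Finset.sum_add_distrib, ← Finset.mul_sum,
      Finset.sum_ite_eq' (Finset.univ.filter (fun i => v j ≤ v i)) i0 (fun _ => b)]
    simp [Finset.mem_filter]
  rw [h1]
  by_cases h : v j ≤ v i0 <;> simp [h] <;> ring

/-- Any inefficient segmentation is Pareto dominated: if some segment's price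
exceeds the lowest value present in it, there is another segmentation together
with a reallocation (transport) of consumers under which every consumer's surplus
is weakly higher and a positive measure of consumers are strictly better off. -/
theorem stmt7 (n k : ℕ) (v f : Fin n → ℝ) (hv : StrictMono v)
    (hvpos : ∀ i, 0 < v i) (hf : ∀ i, 0 < f i)
    (g : Fin k → Fin n → ℝ) (p : Fin k → Fin n)
    (hg : ∀ c i, 0 ≤ g c i) (hsum : ∀ i, ∑ c, g c i = f i)
    (hopt : ∀ c, IsOptimal v (g c) (p c))
    (hineff : ∃ c i, 0 < g c i ∧ v i < v (p c)) :
    ∃ (k' : ℕ) (g' : Fin k' → Fin n → ℝ) (p' : Fin k' → Fin n),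
      (∀ c' i, 0 ≤ g' c' i) ∧ (∀ i, ∑ c', g' c' i = f i) ∧
      (∀ c', IsOptimal v (g' c') (p' c')) ∧
      ∃ t : Fin k → Fin k' → Fin n → ℝ,
        (∀ c c' i, 0 ≤ t c c' i) ∧
        (∀ c i, ∑ c', t c c' i = g c i) ∧
        (∀ c' i, ∑ c, t c c' i = g' c' i) ∧
        (∀ c c' i, 0 < t c c' i → CS (v i) (v (p c)) ≤ CS (v i) (v (p' c'))) ∧
        (∃ c c' i, 0 < t c c' i ∧ CS (v i) (v (p c)) < CS (v i) (v (p' c'))) := by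
  obtain ⟨c0, i0, hgi0, hvi0⟩ := hineff
  -- basic data
  set K : ℝ := rev v (g c0) (p c0) with hKdef
  have hK0 : 0 ≤ K := rev_nonneg v (g c0) hvpos (hg c0) (p c0)
  have hrevle : ∀ j, rev v (g c0) j ≤ K := fun j => hopt c0 j
  have hrev0 : ∀ j, 0 ≤ rev v (g c0) j := rev_nonneg v (g c0) hvpos (hg c0)
  set m : ℝ := g c0 i0 / 2 with hmdef
  have hm : 0 < m := by positivity
  -- the "gap" constant
  set γ : ℝ := Finset.univ.inf' ⟨i0, Finset.mem_univ i0⟩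
      (fun j : Fin n => if j < i0 then v i0 - v j else v i0) with hγdef
  have hγpos : 0 < γ := by
    rw [hγdef]; refine (Finset.lt_inf'_iff _).2 ?_
    intro j _
    by_cases h : j < i0
    · simpa [h] using sub_pos.mpr (hv h)
    · simpa [h] using hvpos i0
  have hγle : ∀ j : Fin n, j < i0 → γ ≤ v i0 - v j := by
    intro j hj
    have := Finset.inf'_le (f := fun j : Fin n => if j < i0 then v i0 - v j else v i0)
      (Finset.mem_univ j)
    simpa [hγdef, hj] using this
  have hγi0 : γ ≤ v i0 := by
    have := Finset.inf'_le (f := fun j : Fin n => if j < i0 then v i0 - v j else v i0)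
      (Finset.mem_univ i0)
    simpa [hγdef] using this
  set δ : ℝ := min (1/2) (m * γ / (K + 1)) with hδdef
  have hδpos : 0 < δ := lt_min (by norm_num) (div_pos (mul_pos hm hγpos) (by linarith))
  have hδhalf : δ ≤ 1/2 := min_le_left _ _
  have hδγ : δ * (K + 1) ≤ m * γ := by
    have h1 : δ ≤ m * γ / (K + 1) := min_le_right _ _
    have h2 : (0:ℝ) < K + 1 := by linarith
    calc δ * (K + 1) ≤ (m * γ / (K + 1)) * (K + 1) := by
          exact mul_le_mul_of_nonneg_right h1 h2.le
      _ = m * γ := by field_simp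
  have hδK : ∀ j, δ * rev v (g c0) j ≤ m * γ := by
    intro j
    have h1 : δ * rev v (g c0) j ≤ δ * K :=
      mul_le_mul_of_nonneg_left (hrevle j) hδpos.le
    nlinarith
  -- the two new coalitions
  set A : Fin n → ℝ := fun i => δ * g c0 i + (if i = i0 then m else 0) with hAdef
  set B : Fin n → ℝ := fun i => (1 - δ) * g c0 i + (if i = i0 then -m else 0) with hBdef
  have hA_nonneg : ∀ i, 0 ≤ A i := by
    intro i
    rw [hAdef]
    by_cases h : i = i0 <;> simp [h] <;> nlinarith [hg c0 i, hg c0 i0]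
  have hB_nonneg : ∀ i, 0 ≤ B i := by
    intro i
    rw [hBdef]
    by_cases h : i = i0 <;> simp [h]
    · subst h; nlinarith [hg c0 i]
    · nlinarith [hg c0 i]
  have hAB : ∀ i, B i + A i = g c0 i := by
    intro i
    rw [hAdef, hBdef]
    by_cases h : i = i0 <;> simp [h] <;> ring
  have hrevA : ∀ j, rev v A j = δ * rev v (g c0) j + (if v j ≤ v i0 then v j * m else 0) :=
    fun j => rev_comb v (g c0) i0 δ m j
  have hrevB : ∀ j, rev v B j
      = (1 - δ) * rev v (g c0) j + (if v j ≤ v i0 then v j * (-m) else 0) :=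
    fun j => rev_comb v (g c0) i0 (1 - δ) (-m) j
  -- optimality of i0 for A
  have hoptA : IsOptimal v A i0 := by
    intro j
    rw [hrevA j, hrevA i0]
    simp only [le_refl, if_true]
    by_cases h : v j ≤ v i0
    · rw [if_pos h]
      by_cases hj : j = i0
      · subst hj; exact le_refl _
      · have hlt : v j < v i0 := lt_of_le_of_ne h (fun e => hj (hv.injective e))
        have hjlt : j < i0 := hv.lt_iff_lt.mp hlt
        have h1 := hγle j hjlt
        have h2 := hδK j
        have h3 : m * γ ≤ m * (v i0 - v j) := mul_le_mul_of_nonneg_left h1 hm.le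
        have h4 : 0 ≤ δ * rev v (g c0) i0 := mul_nonneg hδpos.le (hrev0 i0)
        nlinarith
    · rw [if_neg h]
      have h2 := hδK j
      have h3 : m * γ ≤ m * v i0 := mul_le_mul_of_nonneg_left hγi0 hm.le
      have h4 : 0 ≤ δ * rev v (g c0) i0 := mul_nonneg hδpos.le (hrev0 i0)
      nlinarith
  -- optimality of p c0 for B
  have hoptB : IsOptimal v B (p c0) := by
    intro j
    rw [hrevB j, hrevB (p c0)]
    have hP : ¬ (v (p c0) ≤ v i0) := not_le.mpr hvi0
    rw [if_neg hP]
    have h1 : (1 - δ) * rev v (g c0) j ≤ (1 - δ) * K :=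
      mul_le_mul_of_nonneg_left (hrevle j) (by linarith)
    by_cases h : v j ≤ v i0 <;> simp [h]
    · nlinarith [(hvpos j).le, hm.le, mul_nonneg (hvpos j).le hm.le]
    · exact h1
  -- existence of a high-value type with positive mass in segment c0
  have hi1 : ∃ i1, v (p c0) ≤ v i1 ∧ 0 < g c0 i1 := by
    by_contra hcon
    push_neg at hcon
    have hz : rev v (g c0) (p c0) = 0 := by
      unfold rev
      rw [Finset.sum_eq_zero, mul_zero]
      intro i hi
      exact le_antisymm (hcon i (Finset.mem_filter.mp hi).2) (hg c0 i)
    have hpos : 0 < rev v (g c0) i0 := by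
      unfold rev
      apply mul_pos (hvpos i0)
      have hmem : i0 ∈ Finset.univ.filter (fun i => v i0 ≤ v i) := by
        simp
      have := Finset.single_le_sum (f := g c0) (fun i _ => hg c0 i) hmem
      linarith
    have := hopt c0 i0
    rw [hz] at this
    linarith
  obtain ⟨i1, hvi1, hgi1⟩ := hi1
  have hi1ne : i1 ≠ i0 := by
    intro e
    rw [e] at hvi1
    linarith
  -- build the new segmentation
  refine ⟨k + 1, Fin.snoc (Function.update g c0 B) A, Fin.snoc p i0, ?_, ?_, ?_, ?_⟩
  · intro c' i
    induction c' using Fin.lastCases with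
    | last => simpa using hA_nonneg i
    | cast d =>
      rw [Fin.snoc_castSucc, Function.update_apply]
      by_cases h : d = c0 <;> simp [h]
      · exact hB_nonneg i
      · exact hg d i
  · intro i
    rw [Fin.sum_univ_castSucc]
    simp only [Fin.snoc_castSucc, Fin.snoc_last]
    have : ∀ d : Fin k, Function.update g c0 B d i
        = g d i + (if d = c0 then B i - g c0 i else 0) := by
      intro d
      rw [Function.update_apply]
      by_cases h : d = c0 <;> simp [h]
    rw [Finset.sum_congr rfl (fun d _ => this d), Finset.sum_add_distrib,
      Finset.sum_ite_eq' Finset.univ c0 (fun _ => B i - g c0 i)]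
    simp [hsum i]
    have := hAB i
    linarith
  · intro c'
    induction c' using Fin.lastCases with
    | last => simpa [Fin.snoc_last] using hoptA
    | cast d =>
      simp only [Fin.snoc_castSucc, Function.update_apply]
      by_cases h : d = c0
      · subst h; simpa using hoptB
      · simpa [h] using hopt d
  · refine ⟨fun c c' i => if c' = Fin.castSucc c then (if c = c0 then B i else g c i)
      else if c' = Fin.last k ∧ c = c0 then A i else 0, ?_, ?_, ?_, ?_, ?_⟩
    · intro c c' i
      dsimp only
      split_ifs
      · exact hB_nonneg i
      · exact hg c i
      · exact hA_nonneg i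
      · exact le_refl 0
    · intro c i
      rw [Fin.sum_univ_castSucc]
      dsimp only
      have hne : ∀ d : Fin k, (Fin.castSucc d : Fin (k+1)) ≠ Fin.last k :=
        fun d => (Fin.castSucc_lt_last d).ne
      have hterm : ∀ d : Fin k,
          (if (Fin.castSucc d : Fin (k+1)) = Fin.castSucc c then (if c = c0 then B i else g c i)
            else if (Fin.castSucc d : Fin (k+1)) = Fin.last k ∧ c = c0 then A i else 0)
          = (if d = c then (if c = c0 then B i else g c i) else 0) := by
        intro d
        by_cases h : d = c
        · simp [h]
        · simp [h, Fin.castSucc_inj, hne d]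
      have hlast : (if (Fin.last k : Fin (k+1)) = Fin.castSucc c then (if c = c0 then B i else g c i)
          else if (Fin.last k : Fin (k+1)) = Fin.last k ∧ c = c0 then A i else 0)
          = (if c = c0 then A i else 0) := by
        by_cases h : c = c0 <;> simp [h, (hne c).symm, (hne c0).symm]
      rw [Finset.sum_congr rfl (fun d _ => hterm d),
        Finset.sum_ite_eq' Finset.univ c (fun _ => if c = c0 then B i else g c i), hlast]
      by_cases h : c = c0
      · simp only [h, if_true, Finset.mem_univ]
        linarith [hAB i]
      · simp [h]
    · intro c' i
      induction c' using Fin.lastCases with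
      | last =>
        dsimp only
        have hterm : ∀ c : Fin k,
            (if (Fin.last k : Fin (k+1)) = Fin.castSucc c then (if c = c0 then B i else g c i)
              else if (Fin.last k : Fin (k+1)) = Fin.last k ∧ c = c0 then A i else 0)
            = (if c = c0 then A i else 0) := by
          intro c
          by_cases h : c = c0 <;> simp [h, ((Fin.castSucc_lt_last c).ne).symm, ((Fin.castSucc_lt_last c0).ne).symm]
        rw [Finset.sum_congr rfl (fun c _ => hterm c),
          Finset.sum_ite_eq' Finset.univ c0 (fun _ => A i)]
        simp [Fin.snoc_last]
      | cast d =>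
        dsimp only
        have hterm : ∀ c : Fin k,
            (if (Fin.castSucc d : Fin (k+1)) = Fin.castSucc c then (if c = c0 then B i else g c i)
              else if (Fin.castSucc d : Fin (k+1)) = Fin.last k ∧ c = c0 then A i else 0)
            = (if c = d then (if d = c0 then B i else g d i) else 0) := by
          intro c
          by_cases h : c = d
          · simp [h]
          · simp [h, Fin.castSucc_inj, Ne.symm h, (Fin.castSucc_lt_last d).ne]
        rw [Finset.sum_congr rfl (fun c _ => hterm c),
          Finset.sum_ite_eq' Finset.univ d (fun _ => if d = c0 then B i else g d i)]
        rw [Fin.snoc_castSucc, Function.update_apply]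
        by_cases h : d = c0 <;> simp [h]
    · intro c c' i ht
      dsimp only at ht
      by_cases h1 : c' = Fin.castSucc c
      · subst h1
        simp [Fin.snoc_castSucc]
      · rw [if_neg h1] at ht
        by_cases h2 : c' = Fin.last k ∧ c = c0
        · obtain ⟨h2a, h2b⟩ := h2
          subst h2a
          rw [Fin.snoc_last, h2b]
          unfold CS
          exact max_le_max (by linarith [hvi0.le]) le_rfl
        · rw [if_neg h2] at ht
          exact absurd ht (lt_irrefl 0)
    · refine ⟨c0, Fin.last k, i1, ?_, ?_⟩
      · have hne' : (Fin.last k : Fin (k+1)) ≠ Fin.castSucc c0 :=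
          ((Fin.castSucc_lt_last c0).ne).symm
        dsimp only
        rw [if_neg hne', if_pos ⟨rfl, rfl⟩]
        have hAi1 : A i1 = δ * g c0 i1 := by simp [hAdef, hi1ne]
        rw [hAi1]
        exact mul_pos hδpos hgi1
      · rw [Fin.snoc_last]
        unfold CS
        have h01 : v i0 < v i1 := lt_of_lt_of_le hvi0 hvi1
        rw [max_eq_left (by linarith), max_eq_left (by linarith)]
        linarith
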